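/- Suppose Γ : ℝ^N → ℝ is C¹ and has a compact set X of strict local minimum points in the sense that there exist δ > 0 and a δ-neighborhood X_δ with b := inf_{∂X_δ}Γ > a := Γ|_X (constant on X). If Φ_ε : ℝ^N → ℝ are C¹ functions with Φ_ε(ξ) = C₁Γ(εξ) + o_ε(1) uniformly on X_δ^ε = {ξ : εξ ∈ X_δ} (C₁ > 0), then for ε small the set Y^ε = {ξ ∈ X_δ^ε : Φ_ε(ξ) ≤ C₁(a+b)/2} is compact, satisfies X^ε ⊂ Y^ε ⊂ X_δ^ε, and Y^ε does not meet ∂X_δ^ε; consequently Φ_ε has at least cat(X, X_δ) critical points in X_δ^ε. -/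

import Mathlib

open Filter Set Topology


def ContractibleInVia {X : Type*} [TopologicalSpace X] (U B : Set X) : Prop :=
  ∃ (h : X × ℝ → X) (x₀ : X), ContinuousOn h (U ×ˢ Set.Icc (0:ℝ) 1) ∧
    (∀ p ∈ U ×ˢ Set.Icc (0:ℝ) 1, h p ∈ B) ∧
    (∀ x ∈ U, h (x, 0) = x) ∧ (∀ x ∈ U, h (x, 1) = x₀)

noncomputable def catLS {X : Type*} [TopologicalSpace X] (A B : Set X) : ℕ :=
  sInf {n : ℕ | ∃ U : Fin n → Set X, (A ⊆ ⋃ i, U i) ∧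
    ∀ i, IsClosed (U i) ∧ ContractibleInVia (U i) B}

section Deform

variable {X : Type*} [TopologicalSpace X]

def DeformsTo (A A' B : Set X) : Prop :=
  ∃ h : X × ℝ → X, ContinuousOn h (A ×ˢ Set.Icc (0:ℝ) 1) ∧
    (∀ p ∈ A ×ˢ Set.Icc (0:ℝ) 1, h p ∈ B) ∧
    (∀ x ∈ A, h (x, 0) = x) ∧ (∀ x ∈ A, h (x, 1) ∈ A')

lemma contractibleInVia_iff_deformsTo {U B : Set X} :
    ContractibleInVia U B ↔ ∃ x₀, DeformsTo U {x₀} B := by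
  constructor
  · rintro ⟨h, x₀, hc, hB, h0, h1⟩
    exact ⟨x₀, h, hc, hB, h0, fun x hx => by simp [h1 x hx]⟩
  · rintro ⟨x₀, h, hc, hB, h0, h1⟩
    exact ⟨h, x₀, hc, hB, h0, fun x hx => h1 x hx⟩

lemma DeformsTo.mono {A A' B A₀ A'' B'' : Set X} (h : DeformsTo A A' B)
    (hA : A₀ ⊆ A) (hA' : A' ⊆ A'') (hB : B ⊆ B'') : DeformsTo A₀ A'' B'' := by
  obtain ⟨f, fc, fB, f0, f1⟩ := h
  refine ⟨f, fc.mono (Set.prod_mono hA le_rfl), fun p hp => hB (fB p ⟨hA hp.1, hp.2⟩),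
    fun x hx => f0 x (hA hx), fun x hx => hA' (f1 x (hA hx))⟩

lemma DeformsTo.trans {A A₂ A₃ B : Set X} (h₁ : DeformsTo A A₂ B) (h₂ : DeformsTo A₂ A₃ B) :
    DeformsTo A A₃ B := by
  obtain ⟨f, fc, fB, f0, f1⟩ := h₁
  obtain ⟨g, gc, gB, g0, g1⟩ := h₂
  refine ⟨fun p => if p.2 ≤ 1/2 then f (p.1, 2*p.2) else g (f (p.1, 1), 2*p.2 - 1), ?_, ?_, ?_, ?_⟩
  · -- continuity
    have hsplit : A ×ˢ Set.Icc (0:ℝ) 1 =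
        (A ×ˢ Set.Icc (0:ℝ) (1/2)) ∪ (A ×ˢ Set.Icc (1/2:ℝ) 1) := by
      rw [← Set.prod_union, Set.Icc_union_Icc_eq_Icc] <;> norm_num
    have c1 : ContinuousOn (fun p : X × ℝ => f (p.1, 2*p.2)) (A ×ˢ Set.Icc (0:ℝ) (1/2)) := by
      apply fc.comp (by fun_prop : Continuous fun p : X × ℝ => (p.1, 2*p.2)).continuousOn
      rintro ⟨x, t⟩ ⟨hx, ht⟩
      have ht' : (0:ℝ) ≤ t ∧ t ≤ 1/2 := ht
      exact ⟨hx, show (0:ℝ) ≤ 2*t ∧ 2*t ≤ 1 from ⟨by linarith [ht'.1], by linarith [ht'.2]⟩⟩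
    have cf1 : ContinuousOn (fun x : X => f (x, 1)) A := by
      apply fc.comp (by fun_prop : Continuous fun x : X => (x, (1:ℝ))).continuousOn
      intro x hx; exact ⟨hx, show (0:ℝ) ≤ 1 ∧ (1:ℝ) ≤ 1 from by norm_num⟩
    have c2 : ContinuousOn (fun p : X × ℝ => g (f (p.1, 1), 2*p.2 - 1))
        (A ×ˢ Set.Icc (1/2:ℝ) 1) := by
      apply gc.comp
      · apply ContinuousOn.prodMk
        · exact cf1.comp continuousOn_fst (fun p hp => hp.1)
        · fun_prop
      · rintro ⟨x, t⟩ ⟨hx, ht⟩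
        have ht' : (1:ℝ)/2 ≤ t ∧ t ≤ 1 := ht
        exact ⟨f1 x hx,
          show (0:ℝ) ≤ 2*t - 1 ∧ 2*t - 1 ≤ 1 from ⟨by linarith [ht'.1], by linarith [ht'.2]⟩⟩
    have e1 : Set.EqOn (fun p : X × ℝ => if p.2 ≤ 1/2 then f (p.1, 2*p.2) else
        g (f (p.1, 1), 2*p.2 - 1)) (fun p : X × ℝ => f (p.1, 2*p.2))
        (A ×ˢ Set.Icc (0:ℝ) (1/2)) := by
      rintro ⟨x, t⟩ ⟨hx, ht⟩
      have ht' : (0:ℝ) ≤ t ∧ t ≤ 1/2 := ht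
      simp only [if_pos ht'.2]
    have e2 : Set.EqOn (fun p : X × ℝ => if p.2 ≤ 1/2 then f (p.1, 2*p.2) else
        g (f (p.1, 1), 2*p.2 - 1)) (fun p : X × ℝ => g (f (p.1, 1), 2*p.2 - 1))
        (A ×ˢ Set.Icc (1/2:ℝ) 1) := by
      rintro ⟨x, t⟩ ⟨hx, ht⟩
      have ht' : (1:ℝ)/2 ≤ t ∧ t ≤ 1 := ht
      by_cases h : t ≤ 1/2
      · have hteq : t = 1/2 := le_antisymm h ht'.1
        subst hteq
        show (if (1:ℝ)/2 ≤ 1/2 then f (x, 2*(1/2)) else g (f (x, 1), 2*(1/2) - 1))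
          = g (f (x, 1), 2*(1/2) - 1)
        rw [if_pos le_rfl]
        have hh1 : (2:ℝ) * (1/2) = 1 := by norm_num
        rw [hh1]
        have hh2 : (1:ℝ) - 1 = 0 := by norm_num
        rw [hh2, g0 _ (f1 x hx)]
      · simp only [if_neg h]
    rw [hsplit]
    intro p hp
    rcases hp with hp1 | hp2
    · refine ContinuousWithinAt.union ((c1.congr e1 |>.continuousWithinAt hp1)) ?_
      by_cases h2 : p ∈ A ×ˢ Set.Icc (1/2:ℝ) 1
      · exact (c2.congr e2 |>.continuousWithinAt h2)
      · apply continuousWithinAt_of_notMem_closure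
        intro hcl
        have hsub : closure (A ×ˢ Set.Icc (1/2:ℝ) 1) ⊆ Set.univ ×ˢ Set.Icc (1/2:ℝ) 1 :=
          closure_minimal (Set.prod_mono (Set.subset_univ A) le_rfl)
            (isClosed_univ.prod isClosed_Icc)
        exact h2 ⟨hp1.1, (hsub hcl).2⟩
    · refine ContinuousWithinAt.union ?_ ((c2.congr e2 |>.continuousWithinAt hp2))
      by_cases h1 : p ∈ A ×ˢ Set.Icc (0:ℝ) (1/2)
      · exact (c1.congr e1 |>.continuousWithinAt h1)
      · apply continuousWithinAt_of_notMem_closure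
        intro hcl
        have hsub : closure (A ×ˢ Set.Icc (0:ℝ) (1/2)) ⊆ Set.univ ×ˢ Set.Icc (0:ℝ) (1/2) :=
          closure_minimal (Set.prod_mono (Set.subset_univ A) le_rfl)
            (isClosed_univ.prod isClosed_Icc)
        exact h1 ⟨hp2.1, (hsub hcl).2⟩
  · rintro ⟨x, t⟩ ⟨hx, ht⟩
    have ht' : (0:ℝ) ≤ t ∧ t ≤ 1 := ht
    by_cases h : t ≤ 1/2
    · show (if t ≤ 1/2 then f (x, 2*t) else g (f (x, 1), 2*t - 1)) ∈ B
      rw [if_pos h]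
      exact fB _ ⟨hx, show (0:ℝ) ≤ 2*t ∧ 2*t ≤ 1 from ⟨by linarith [ht'.1], by linarith⟩⟩
    · show (if t ≤ 1/2 then f (x, 2*t) else g (f (x, 1), 2*t - 1)) ∈ B
      rw [if_neg h]
      exact gB _ ⟨f1 x hx,
        show (0:ℝ) ≤ 2*t - 1 ∧ 2*t - 1 ≤ 1 from ⟨by push_neg at h; linarith, by linarith [ht'.2]⟩⟩
  · intro x hx
    show (if (0:ℝ) ≤ 1/2 then f (x, 2*0) else g (f (x, 1), 2*0 - 1)) = x
    rw [if_pos (by norm_num : (0:ℝ) ≤ 1/2)]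
    have : (2:ℝ) * 0 = 0 := by norm_num
    rw [this]; exact f0 x hx
  · intro x hx
    show (if (1:ℝ) ≤ 1/2 then f (x, 2*1) else g (f (x, 1), 2*1 - 1)) ∈ A₃
    rw [if_neg (by norm_num : ¬ (1:ℝ) ≤ 1/2)]
    have : (2:ℝ) * 1 - 1 = 1 := by norm_num
    rw [this]
    exact g1 _ (f1 x hx)

lemma DeformsTo.contractibleInVia {A U B : Set X} (h : DeformsTo A U B)
    (hU : ContractibleInVia U B) : ContractibleInVia A B := by
  rw [contractibleInVia_iff_deformsTo] at hU ⊢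
  obtain ⟨x₀, hU⟩ := hU
  exact ⟨x₀, h.trans hU⟩

end Deform

section Cat

variable {X : Type*} [TopologicalSpace X]

def catSet (A B : Set X) : Set ℕ :=
  {n : ℕ | ∃ U : Fin n → Set X, (A ⊆ ⋃ i, U i) ∧
    ∀ i, IsClosed (U i) ∧ ContractibleInVia (U i) B}

lemma catLS_eq_sInf (A B : Set X) : catLS A B = sInf (catSet A B) := rfl

lemma catLS_le_of_cover {A B : Set X} {n : ℕ} (U : Fin n → Set X) (hc : A ⊆ ⋃ i, U i)
    (h : ∀ i, IsClosed (U i) ∧ ContractibleInVia (U i) B) : catLS A B ≤ n :=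
  Nat.sInf_le ⟨U, hc, h⟩

lemma exists_cover_catLS {A B : Set X} (hne : (catSet A B).Nonempty) :
    ∃ U : Fin (catLS A B) → Set X, (A ⊆ ⋃ i, U i) ∧
      ∀ i, IsClosed (U i) ∧ ContractibleInVia (U i) B :=
  Nat.sInf_mem hne

lemma catLS_mono_left {A₀ A B : Set X} (h : A₀ ⊆ A) (hA : (catSet A B).Nonempty) :
    catLS A₀ B ≤ catLS A B := by
  obtain ⟨U, hc, hU⟩ := exists_cover_catLS hA
  exact catLS_le_of_cover U (h.trans hc) hU

lemma catLS_le_add {A A₁ A₂ B : Set X} (hA : A ⊆ A₁ ∪ A₂)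
    (h₁ : (catSet A₁ B).Nonempty) (h₂ : (catSet A₂ B).Nonempty) :
    catLS A B ≤ catLS A₁ B + catLS A₂ B := by
  obtain ⟨U₁, hc₁, hU₁⟩ := exists_cover_catLS h₁
  obtain ⟨U₂, hc₂, hU₂⟩ := exists_cover_catLS h₂
  refine catLS_le_of_cover (Fin.addCases U₁ U₂) ?_ ?_
  · intro x hx
    rcases hA hx with hx1 | hx2
    · obtain ⟨i, hi⟩ := Set.mem_iUnion.mp (hc₁ hx1)
      exact Set.mem_iUnion.mpr ⟨Fin.castAdd _ i, by simpa using hi⟩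
    · obtain ⟨i, hi⟩ := Set.mem_iUnion.mp (hc₂ hx2)
      exact Set.mem_iUnion.mpr ⟨Fin.natAdd _ i, by simpa using hi⟩
  · intro i
    refine Fin.addCases (fun j => ?_) (fun j => ?_) i
    · simpa using hU₁ j
    · simpa using hU₂ j

lemma contractibleInVia_singleton [T1Space X] {z : X} {B : Set X} (hz : z ∈ B) :
    ContractibleInVia {z} B := by
  refine ⟨fun _ => z, z, continuousOn_const, fun p _ => hz, ?_, fun x _ => rfl⟩
  rintro x rfl; rfl

lemma catLS_le_ncard [T1Space X] {K B : Set X} (hK : K.Finite) (hKB : K ⊆ B) :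
    catLS K B ≤ K.ncard := by
  rw [Set.ncard_eq_toFinset_card _ hK]
  set n := hK.toFinset.card
  have e : Fin n ≃ hK.toFinset := hK.toFinset.equivFin.symm
  refine catLS_le_of_cover (fun i => {(e i : X)}) ?_ ?_
  · intro x hx
    have hx' : x ∈ hK.toFinset := by simpa using hx
    refine Set.mem_iUnion.mpr ⟨e.symm ⟨x, hx'⟩, ?_⟩
    simp
  · intro i
    refine ⟨isClosed_singleton, contractibleInVia_singleton (hKB ?_)⟩
    have h2 := (e i).2
    rw [Set.Finite.mem_toFinset] at h2
    exact h2

lemma catLS_le_of_deformsTo {A A' B : Set X} (hA : IsClosed A) (hdef : DeformsTo A A' B)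
    (hwit : (catSet A' B).Nonempty) : catLS A B ≤ catLS A' B := by
  obtain ⟨U, hc, hU⟩ := exists_cover_catLS hwit
  obtain ⟨h, hcont, hB, h0, h1⟩ := hdef
  have hf : ContinuousOn (fun x => h (x, 1)) A := by
    apply hcont.comp (by fun_prop : Continuous fun x : X => (x, (1:ℝ))).continuousOn
    intro x hx; exact ⟨hx, show (0:ℝ) ≤ 1 ∧ (1:ℝ) ≤ 1 from by norm_num⟩
  refine catLS_le_of_cover (fun i => A ∩ (fun x => h (x, 1)) ⁻¹' (U i)) ?_ ?_
  · intro x hx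
    obtain ⟨i, hi⟩ := Set.mem_iUnion.mp (hc (h1 x hx))
    exact Set.mem_iUnion.mpr ⟨i, hx, hi⟩
  · intro i
    refine ⟨hf.preimage_isClosed_of_isClosed hA (hU i).1, ?_⟩
    have hdef' : DeformsTo (A ∩ (fun x => h (x, 1)) ⁻¹' (U i)) (U i) B := by
      refine ⟨h, hcont.mono (Set.prod_mono Set.inter_subset_left le_rfl), ?_, ?_, ?_⟩
      · exact fun p hp => hB p ⟨hp.1.1, hp.2⟩
      · exact fun x hx => h0 x hx.1
      · exact fun x hx => hx.2
    exact hdef'.contractibleInVia (hU i).2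

lemma catLS_le_preimage_homeo {A B : Set X} (e : X ≃ₜ X)
    (hwit : (catSet (e ⁻¹' A) (e ⁻¹' B)).Nonempty) :
    catLS A B ≤ catLS (e ⁻¹' A) (e ⁻¹' B) := by
  obtain ⟨V, hc, hV⟩ := exists_cover_catLS hwit
  refine catLS_le_of_cover (fun i => e.symm ⁻¹' (V i)) ?_ ?_
  · intro a ha
    have : e.symm a ∈ e ⁻¹' A := by simp [Set.mem_preimage, ha]
    obtain ⟨i, hi⟩ := Set.mem_iUnion.mp (hc this)
    exact Set.mem_iUnion.mpr ⟨i, hi⟩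
  · intro i
    refine ⟨(hV i).1.preimage e.symm.continuous, ?_⟩
    obtain ⟨h, x₀, hcont, hB, h0, h1⟩ := (hV i).2
    refine ⟨fun p => e (h (e.symm p.1, p.2)), e x₀, ?_, ?_, ?_, ?_⟩
    · apply e.continuous.comp_continuousOn
      apply hcont.comp
      · exact (e.symm.continuous.prodMap continuous_id).continuousOn
      · rintro ⟨x, t⟩ ⟨hx, ht⟩
        exact ⟨hx, ht⟩
    · rintro ⟨x, t⟩ ⟨hx, ht⟩
      have := hB (e.symm x, t) ⟨hx, ht⟩
      simpa using this
    · intro x hx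
      simp [h0 _ hx]
    · intro x hx
      simp [h1 _ hx]

end Cat

section Normed

variable {E : Type*} [NormedAddCommGroup E] [NormedSpace ℝ E]

lemma contractibleInVia_of_convex {C B : Set E} (hC : Convex ℝ C) {c₀ : E} (hc₀ : c₀ ∈ C)
    (hCB : C ⊆ B) : ContractibleInVia C B := by
  refine ⟨fun p => (1 - p.2) • p.1 + p.2 • c₀, c₀, ?_, ?_, ?_, ?_⟩
  · fun_prop
  · rintro ⟨x, t⟩ ⟨hx, ht⟩
    have ht' : (0:ℝ) ≤ t ∧ t ≤ 1 := ht
    exact hCB (hC hx hc₀ (by linarith [ht'.2]) ht'.1 (by ring))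
  · intro x _; simp
  · intro x _; simp

lemma catSet_nonempty_of_balls {K B : Set E} (hK : IsCompact K)
    (hr : ∀ x ∈ K, ∃ r > 0, Metric.closedBall x r ⊆ B) : (catSet K B).Nonempty := by
  rcases K.eq_empty_or_nonempty with rfl | hne
  · exact ⟨0, fun i => i.elim0, by simp, fun i => i.elim0⟩
  have hr' : ∀ x : K, ∃ r > 0, Metric.closedBall (x : E) r ⊆ B := fun x => hr x x.2
  choose r hrpos hrB using hr'
  have hcov : K ⊆ ⋃ x : K, Metric.ball (x : E) (r x) := by
    intro y hy
    exact Set.mem_iUnion.mpr ⟨⟨y, hy⟩, Metric.mem_ball_self (hrpos _)⟩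
  obtain ⟨t, ht⟩ := hK.elim_finite_subcover _ (fun x : K => Metric.isOpen_ball) hcov
  set n := t.card
  have e : Fin n ≃ t := t.equivFin.symm
  refine ⟨n, fun i => Metric.closedBall ((e i : K) : E) (r (e i)), ?_, ?_⟩
  · intro y hy
    have := ht hy
    simp only [Set.mem_iUnion] at this
    obtain ⟨i, hit, hyb⟩ := this
    refine Set.mem_iUnion.mpr ⟨e.symm ⟨i, hit⟩, ?_⟩
    have he : e (e.symm ⟨i, hit⟩) = ⟨i, hit⟩ := e.apply_symm_apply _
    rw [he]
    exact Metric.ball_subset_closedBall hyb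
  · intro i
    exact ⟨Metric.isClosed_closedBall,
      contractibleInVia_of_convex (convex_closedBall _ _)
        (Metric.mem_closedBall_self (hrpos _).le) (hrB _)⟩

end Normed

section Grad
variable {N : ℕ}

noncomputable def gradv (Φ : (Fin N → ℝ) → ℝ) (x : Fin N → ℝ) : Fin N → ℝ :=
  fun i => fderiv ℝ Φ x (Pi.single i 1)

noncomputable def qf (Φ : (Fin N → ℝ) → ℝ) (x : Fin N → ℝ) : ℝ :=
  ∑ i, (fderiv ℝ Φ x (Pi.single i 1))^2

lemma clm_apply_eq_sum (f : (Fin N → ℝ) →L[ℝ] ℝ) (y : Fin N → ℝ) :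
    f y = ∑ i, y i * f (Pi.single i 1) := by
  conv_lhs => rw [pi_eq_sum_univ y]
  rw [map_sum]
  refine Finset.sum_congr rfl fun i _ => ?_
  have : (fun j => if i = j then (1:ℝ) else 0) = Pi.single i 1 := by
    ext j
    simp [Pi.single_apply, eq_comm]
  rw [this, map_smul, smul_eq_mul]

lemma qf_nonneg (Φ : (Fin N → ℝ) → ℝ) (x : Fin N → ℝ) : 0 ≤ qf Φ x :=
  Finset.sum_nonneg fun i _ => sq_nonneg _

lemma fderiv_apply_gradv (Φ : (Fin N → ℝ) → ℝ) (x : Fin N → ℝ) :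
    fderiv ℝ Φ x (gradv Φ x) = qf Φ x := by
  rw [clm_apply_eq_sum]
  refine Finset.sum_congr rfl fun i _ => ?_
  simp [gradv, sq]

lemma fderiv_eq_zero_of_qf (Φ : (Fin N → ℝ) → ℝ) (x : Fin N → ℝ) (h : qf Φ x = 0) :
    fderiv ℝ Φ x = 0 := by
  have hz : ∀ i ∈ Finset.univ, (fderiv ℝ Φ x (Pi.single i 1))^2 = 0 := by
    rw [← Finset.sum_eq_zero_iff_of_nonneg (fun i _ => sq_nonneg _)]
    exact h
  ext y
  rw [clm_apply_eq_sum]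
  simp only [ContinuousLinearMap.zero_apply]
  refine Finset.sum_eq_zero fun i _ => ?_
  have := hz i (Finset.mem_univ i)
  have : fderiv ℝ Φ x (Pi.single i 1) = 0 := by
    exact pow_eq_zero_iff (by norm_num) |>.mp this
  rw [this, mul_zero]

lemma norm_gradv_le (Φ : (Fin N → ℝ) → ℝ) (x : Fin N → ℝ) :
    ‖gradv Φ x‖ ≤ Real.sqrt (qf Φ x) := by
  refine (pi_norm_le_iff_of_nonneg (Real.sqrt_nonneg _)).mpr fun i => ?_
  have h1 : ‖gradv Φ x i‖ = Real.sqrt ((fderiv ℝ Φ x (Pi.single i 1))^2) := by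
    rw [Real.sqrt_sq_eq_abs]; rfl
  rw [h1]
  have h2 : (fderiv ℝ Φ x (Pi.single i 1))^2 ≤ qf Φ x := by
    unfold qf
    exact Finset.single_le_sum (f := fun j => (fderiv ℝ Φ x (Pi.single j 1))^2)
      (fun j _ => sq_nonneg _) (Finset.mem_univ i)
  exact Real.sqrt_le_sqrt h2

lemma continuous_gradv {Φ : (Fin N → ℝ) → ℝ} (hΦ : ContDiff ℝ 1 Φ) :
    Continuous (gradv Φ) := by
  have h := hΦ.continuous_fderiv one_ne_zero
  exact continuous_pi fun i => h.clm_apply continuous_const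

lemma continuous_qf {Φ : (Fin N → ℝ) → ℝ} (hΦ : ContDiff ℝ 1 Φ) :
    Continuous (qf Φ) := by
  have h := hΦ.continuous_fderiv one_ne_zero
  exact continuous_finset_sum _ fun i _ => (h.clm_apply continuous_const).pow 2

end Grad

section Stay
variable {N : ℕ}

lemma segment_stay {Φ : (Fin N → ℝ) → ℝ} {D : Set (Fin N → ℝ)} (hD : IsClosed D)
    {L : ℝ} (hfront : ∀ x ∈ frontier D, L < Φ x) (hΦc : Continuous Φ)
    {y v : Fin N → ℝ} (hy : y ∈ D) (hΦle : ∀ s ∈ Set.Icc (0:ℝ) 1, Φ (y + s • v) ≤ L) :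
    ∀ s ∈ Set.Icc (0:ℝ) 1, y + s • v ∈ D := by
  set g : ℝ → (Fin N → ℝ) := fun u => y + u • v with hg
  have gcont : Continuous g := by fun_prop
  set T : Set ℝ := {s | s ∈ Set.Icc (0:ℝ) 1 ∧ ∀ u ∈ Set.Icc (0:ℝ) s, g u ∈ D} with hT
  have h0T : (0:ℝ) ∈ T := by
    refine ⟨by norm_num, fun u hu => ?_⟩
    have : u = 0 := le_antisymm hu.2 hu.1
    subst this
    simpa [hg] using hy
  have hbdd : BddAbove T := ⟨1, fun s hs => hs.1.2⟩
  set t₀ := sSup T with ht₀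
  have ht₀0 : 0 ≤ t₀ := le_csSup hbdd h0T
  have ht₀1 : t₀ ≤ 1 := csSup_le ⟨0, h0T⟩ fun s hs => hs.1.2
  have hlt : ∀ u, 0 ≤ u → u < t₀ → g u ∈ D := by
    intro u hu0 hut
    obtain ⟨s, hsT, hus⟩ := exists_lt_of_lt_csSup ⟨0, h0T⟩ hut
    exact hsT.2 u ⟨hu0, hus.le⟩
  have hDt₀ : g t₀ ∈ D := by
    rcases eq_or_lt_of_le ht₀0 with heq | hpos
    · rw [← heq]
      simpa [hg] using hy
    · have htd : Filter.Tendsto g (nhdsWithin t₀ (Set.Iio t₀)) (nhds (g t₀)) :=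
        (gcont.tendsto t₀).mono_left nhdsWithin_le_nhds
      refine hD.mem_of_tendsto htd ?_
      filter_upwards [Ioo_mem_nhdsLT_of_mem (⟨hpos, le_refl t₀⟩ : t₀ ∈ Set.Ioc 0 t₀)]
        with u hu
      exact hlt u hu.1.le hu.2
  have ht₀eq : t₀ = 1 := by
    by_contra hne
    have ht₀lt : t₀ < 1 := lt_of_le_of_ne ht₀1 hne
    have hΦt₀ : Φ (g t₀) ≤ L := hΦle t₀ ⟨ht₀0, ht₀1⟩
    have hint : g t₀ ∈ interior D := by
      by_contra hni
      have : g t₀ ∈ frontier D := by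
        rw [hD.frontier_eq]
        exact ⟨hDt₀, hni⟩
      exact absurd (hfront _ this) (not_lt.mpr hΦt₀)
    have hnb : (g ⁻¹' interior D) ∈ nhds t₀ :=
      (isOpen_interior.preimage gcont).mem_nhds hint
    obtain ⟨e, he, hball⟩ := Metric.mem_nhds_iff.mp hnb
    set s' := min (t₀ + e/2) 1 with hs'
    have hs't₀ : t₀ < s' := lt_min (by linarith) ht₀lt
    have hs'T : s' ∈ T := by
      refine ⟨⟨le_trans ht₀0 hs't₀.le, min_le_right _ _⟩, fun u hu => ?_⟩
      rcases lt_trichotomy u t₀ with h | h | h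
      · exact hlt u hu.1 h
      · rw [h]; exact hDt₀
      · have : u ∈ Metric.ball t₀ e := by
          rw [Metric.mem_ball, Real.dist_eq, abs_of_pos (by linarith)]
          have : u ≤ t₀ + e/2 := le_trans hu.2 (min_le_left _ _)
          linarith
        exact interior_subset (hball this)
    exact absurd (le_csSup hbdd hs'T) (not_le.mpr hs't₀)
  intro s hs
  rcases lt_trichotomy s t₀ with h | h | h
  · exact hlt s hs.1 h
  · rw [h]; exact hDt₀
  · exfalso; rw [ht₀eq] at h; exact absurd hs.2 (not_le.mpr h)

end Stay

section Descent
variable {N : ℕ}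

set_option maxHeartbeats 2000000 in
lemma descent {Φ : (Fin N → ℝ) → ℝ} {D : Set (Fin N → ℝ)} {L : ℝ}
    (hΦ : ContDiff ℝ 1 Φ) (hD : IsCompact D)
    (hfront : ∀ x ∈ frontier D, L < Φ x)
    (A : Set (Fin N → ℝ)) (α β σ γ₀ Δ : ℝ)
    (hσ : 0 < σ) (hγ₀ : 0 < γ₀) (hαβ : α ≤ β)
    (hΔ : 2 / Real.sqrt σ * (β - α + 2*γ₀) ≤ Δ)
    (hA : A ⊆ D) (hAL : ∀ x ∈ A, Φ x ≤ L) (hAβ : ∀ x ∈ A, Φ x ≤ β)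
    (hg1 : ∀ y, y ∈ D → Φ y ≤ L → α - γ₀ ≤ Φ y → Φ y ≤ β →
      (∃ x ∈ A, dist y x ≤ Δ) → σ ≤ qf Φ y) :
    DeformsTo A {y | y ∈ D ∧ Φ y ≤ L ∧ Φ y ≤ α} D := by
  rcases A.eq_empty_or_nonempty with rfl | hAne
  · exact ⟨fun p => p.1, continuousOn_fst, fun p hp => absurd hp.1 (Set.notMem_empty _),
      fun x hx => absurd hx (Set.notMem_empty _), fun x hx => absurd hx (Set.notMem_empty _)⟩
  have hDne : D.Nonempty := hAne.mono hA
  have hΦc : Continuous Φ := hΦ.continuous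
  have hsσ : 0 < Real.sqrt σ := Real.sqrt_pos.mpr hσ
  -- the compact neighborhood R
  set R : Set (Fin N → ℝ) := Metric.cthickening 1 D with hR
  have hRcomp : IsCompact R := by
    refine Metric.isCompact_of_isClosed_isBounded Metric.isClosed_cthickening ?_
    exact hD.isBounded.cthickening
  have hDR : D ⊆ R := Metric.self_subset_cthickening D
  have hRne : R.Nonempty := hDne.mono hDR
  -- bound on qf over R
  obtain ⟨xm, _, hxm⟩ := hRcomp.exists_isMaxOn hRne (continuous_qf hΦ).continuousOn
  set Q : ℝ := max (qf Φ xm) 0 + 1 with hQ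
  have hQ1 : 1 ≤ Q := by
    have : (0:ℝ) ≤ max (qf Φ xm) 0 := le_max_right _ _
    linarith
  have hQpos : 0 < Q := by linarith
  have hQbound : ∀ y ∈ R, qf Φ y ≤ Q := fun y hy =>
    le_trans (hxm hy) (by linarith [le_max_left (qf Φ xm) (0:ℝ)])
  have hsQ : 1 ≤ Real.sqrt Q := by
    rw [show (1:ℝ) = Real.sqrt 1 by simp]
    exact Real.sqrt_le_sqrt hQ1
  have hsQpos : 0 < Real.sqrt Q := lt_of_lt_of_le one_pos hsQ
  set κ : ℝ := Real.sqrt σ / 2 with hκ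
  have hκpos : 0 < κ := by positivity
  -- uniform continuity of the derivative
  have hFcont : Continuous (fderiv ℝ Φ) := hΦ.continuous_fderiv one_ne_zero
  have hUC := Metric.uniformContinuousOn_iff.mp
    (hRcomp.uniformContinuousOn_of_continuous hFcont.continuousOn) κ hκpos
  obtain ⟨μ₀, hμ₀pos, hμ₀⟩ := hUC
  -- the step size
  set μ : ℝ := min (min μ₀ 1 / (2 * Real.sqrt Q)) (γ₀ / (Q + κ * Real.sqrt Q + 1)) with hμdef
  have hμpos : 0 < μ := by
    apply lt_min
    · positivity
    · positivity
  have hμseg : μ * Real.sqrt Q ≤ min μ₀ 1 / 2 := by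
    have h1 : μ ≤ min μ₀ 1 / (2 * Real.sqrt Q) := min_le_left _ _
    calc μ * Real.sqrt Q ≤ min μ₀ 1 / (2 * Real.sqrt Q) * Real.sqrt Q :=
          mul_le_mul_of_nonneg_right h1 hsQpos.le
      _ = min μ₀ 1 / 2 := by field_simp
  have hμdec : μ * (Q + κ * Real.sqrt Q) ≤ γ₀ := by
    have h1 : μ ≤ γ₀ / (Q + κ * Real.sqrt Q + 1) := min_le_right _ _
    have hpos : 0 < Q + κ * Real.sqrt Q + 1 := by positivity
    have hnn : 0 ≤ Q + κ * Real.sqrt Q := by positivity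
    calc μ * (Q + κ * Real.sqrt Q) ≤ γ₀ / (Q + κ * Real.sqrt Q + 1) * (Q + κ * Real.sqrt Q) :=
          mul_le_mul_of_nonneg_right h1 hnn
      _ ≤ γ₀ := by
          rw [div_mul_eq_mul_div, div_le_iff₀ hpos]
          nlinarith
  -- cutoff and the descent map
  set χ : (Fin N → ℝ) → ℝ := fun x => max 0 (min 1 ((Φ x - (α - γ₀))/γ₀)) with hχdef
  have hχ01 : ∀ x, 0 ≤ χ x ∧ χ x ≤ 1 := fun x =>
    ⟨le_max_left _ _, max_le (by norm_num) (min_le_left _ _)⟩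
  have hχ1 : ∀ x, α ≤ Φ x → χ x = 1 := by
    intro x hx
    have h1 : (1:ℝ) ≤ (Φ x - (α - γ₀))/γ₀ := by
      rw [le_div_iff₀ hγ₀]; linarith
    simp only [hχdef]
    rw [min_eq_left h1, max_eq_right (by norm_num : (0:ℝ) ≤ 1)]
  have hχpos_imp : ∀ x, 0 < χ x → α - γ₀ < Φ x := by
    intro x hx
    by_contra hc
    push_neg at hc
    have h1 : (Φ x - (α - γ₀))/γ₀ ≤ 0 := div_nonpos_of_nonpos_of_nonneg (by linarith) hγ₀.le
    have : χ x ≤ 0 := by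
      simp only [hχdef]
      exact max_le le_rfl (le_trans (min_le_right _ _) h1)
    linarith
  have hχc : Continuous χ := by
    apply Continuous.max continuous_const
    apply Continuous.min continuous_const
    fun_prop
  set g : (Fin N → ℝ) → (Fin N → ℝ) := fun x => x - (μ * χ x) • gradv Φ x with hgdef
  have hgc : Continuous g := by
    apply Continuous.sub continuous_id
    exact (continuous_const.mul hχc).smul (continuous_gradv hΦ)
  -- the main one-step estimate
  have step : ∀ y, y ∈ D → Φ y ≤ L → Φ y ≤ β → (∃ x ∈ A, dist y x ≤ Δ) →
      (∀ s ∈ Set.Icc (0:ℝ) 1, (y + s • (g y - y)) ∈ D ∧ Φ (y + s • (g y - y)) ≤ Φ y) ∧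
      Φ (g y) ≤ Φ y ∧
      dist (g y) y ≤ 2 / Real.sqrt σ * (Φ y - Φ (g y)) ∧
      Φ y - Φ (g y) ≤ γ₀ ∧
      (α ≤ Φ y → Φ (g y) ≤ Φ y - μ*σ/2) ∧
      min (α - 2*γ₀) (Φ y) ≤ Φ (g y) := by
    intro y hyD hyL hyβ hynear
    rcases eq_or_lt_of_le (hχ01 y).1 with hχ0 | hχpos
    · -- no movement
      have hgy : g y = y := by
        simp only [hgdef, ← hχ0, mul_zero, zero_smul, sub_zero]
      have hseg : ∀ s ∈ Set.Icc (0:ℝ) 1, y + s • (g y - y) = y := by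
        intro s _
        rw [hgy, sub_self, smul_zero, add_zero]
      refine ⟨fun s hs => by rw [hseg s hs]; exact ⟨hyD, le_rfl⟩, by rw [hgy], ?_, ?_, ?_, ?_⟩
      · rw [hgy, dist_self, sub_self, mul_zero]
      · rw [hgy]; linarith
      · intro hα
        exfalso
        have := hχ1 y hα
        rw [← hχ0] at this
        norm_num at this
      · rw [hgy]; exact min_le_right _ _
    · -- movement: gradient is large
      have hΦlb : α - γ₀ < Φ y := hχpos_imp y hχpos
      have hq : σ ≤ qf Φ y := hg1 y hyD hyL hΦlb.le hyβ hynear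
      set q : ℝ := qf Φ y with hqdef
      set v : (Fin N → ℝ) := gradv Φ y with hvdef
      set c : ℝ := μ * χ y with hcdef
      have hqnn : 0 ≤ q := qf_nonneg Φ y
      have hqQ : q ≤ Q := hQbound y (hDR hyD)
      have hsq : Real.sqrt σ ≤ Real.sqrt q := Real.sqrt_le_sqrt hq
      have hsqQ : Real.sqrt q ≤ Real.sqrt Q := Real.sqrt_le_sqrt hqQ
      have hsqpos : 0 < Real.sqrt q := lt_of_lt_of_le hsσ hsq
      have hvq : ‖v‖ ≤ Real.sqrt q := norm_gradv_le Φ y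
      have hvnn : 0 ≤ ‖v‖ := norm_nonneg _
      have hc0 : 0 ≤ c := mul_nonneg hμpos.le (hχ01 y).1
      have hcμ : c ≤ μ := by
        have := (hχ01 y).2
        calc c = μ * χ y := rfl
          _ ≤ μ * 1 := mul_le_mul_of_nonneg_left this hμpos.le
          _ = μ := mul_one μ
      have hκq : Real.sqrt σ / 2 ≤ Real.sqrt q - κ := by
        rw [hκ]; linarith
      -- the fundamental two-sided estimate
      have key : ∀ s, 0 ≤ s → s ≤ c →
          Φ (y - s • v) ≤ Φ y - s * Real.sqrt q * (Real.sqrt q - κ) ∧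
          Φ y - s * q - κ * (s * Real.sqrt q) ≤ Φ (y - s • v) := by
        intro s hs0 hsc
        have hsnorm : ‖(y - s • v) - y‖ = s * ‖v‖ := by
          have h1 : (y - s • v) - y = -(s • v) := by abel
          rw [h1, norm_neg, norm_smul, Real.norm_of_nonneg hs0]
        have hsnormle : ‖(y - s • v) - y‖ ≤ min μ₀ 1 / 2 := by
          rw [hsnorm]
          calc s * ‖v‖ ≤ μ * Real.sqrt Q := by
                apply mul_le_mul (le_trans hsc hcμ) (le_trans hvq hsqQ) hvnn hμpos.le
            _ ≤ min μ₀ 1 / 2 := hμseg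
        set S : Set (Fin N → ℝ) := Metric.closedBall y (min μ₀ 1 / 2) with hSdef
        have hSR : S ⊆ R := by
          intro z hz
          have hdz : dist z y ≤ 1 := le_trans (Metric.mem_closedBall.mp hz)
            (by have := min_le_right μ₀ 1; linarith)
          exact Metric.mem_cthickening_of_dist_le z y 1 D hyD hdz
        have hderiv : ∀ z ∈ S, HasFDerivWithinAt Φ (fderiv ℝ Φ z) S z := fun z _ =>
          (hΦ.differentiable one_ne_zero z).hasFDerivAt.hasFDerivWithinAt
        have hbound : ∀ z ∈ S, ‖fderiv ℝ Φ z - fderiv ℝ Φ y‖ ≤ κ := by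
          intro z hz
          have h1 : dist z y < μ₀ := lt_of_le_of_lt (Metric.mem_closedBall.mp hz)
            (by have h2 := min_le_left μ₀ 1; linarith)
          have := hμ₀ z (hSR hz) y (hDR hyD) h1
          rw [dist_eq_norm] at this
          exact this.le
        have hyS : y ∈ S := Metric.mem_closedBall_self (by positivity)
        have hy'S : y - s • v ∈ S := by
          rw [Metric.mem_closedBall, dist_eq_norm]
          exact hsnormle
        have hmain := (convex_closedBall y (min μ₀ 1 / 2)).norm_image_sub_le_of_norm_hasFDerivWithin_le'
          hderiv hbound hyS hy'S
        have happ : fderiv ℝ Φ y ((y - s • v) - y) = -(s * q) := by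
          have h1 : (y - s • v) - y = -(s • v) := by abel
          rw [h1, map_neg, map_smul]
          rw [hvdef, fderiv_apply_gradv]
          simp [smul_eq_mul, hqdef]
        rw [happ, hsnorm] at hmain
        have habs : |Φ (y - s • v) - Φ y + s * q| ≤ κ * (s * ‖v‖) := by
          have h2 : Φ (y - s • v) - Φ y - -(s * q) = Φ (y - s • v) - Φ y + s * q := by ring
          rw [← Real.norm_eq_abs, ← h2]
          exact hmain
        rw [abs_le] at habs
        constructor
        · have h3 : κ * (s * ‖v‖) ≤ κ * (s * Real.sqrt q) := by
            apply mul_le_mul_of_nonneg_left _ hκpos.le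
            exact mul_le_mul_of_nonneg_left hvq hs0
          have h4 : s * q = s * Real.sqrt q * Real.sqrt q := by
            rw [mul_assoc, Real.mul_self_sqrt hqnn]
          nlinarith [habs.2]
        · have h3 : κ * (s * ‖v‖) ≤ κ * (s * Real.sqrt q) := by
            apply mul_le_mul_of_nonneg_left _ hκpos.le
            exact mul_le_mul_of_nonneg_left hvq hs0
          nlinarith [habs.1]
      have hgy_eq : g y = y - c • v := rfl
      have hgyv : g y - y = -(c • v) := by rw [hgy_eq]; abel
      -- Φ decreases along the whole segment, and the segment stays in D
      have hΦseg : ∀ s ∈ Set.Icc (0:ℝ) 1, Φ (y + s • (g y - y)) ≤ Φ y := by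
        intro s hs
        have hform : y + s • (g y - y) = y - (s * c) • v := by
          rw [hgyv, smul_neg, smul_smul]
          abel
        rw [hform]
        have h1 := (key (s * c) (mul_nonneg hs.1 hc0)
          (mul_le_of_le_one_left hc0 hs.2 : s * c ≤ c)).1
        linarith [h1, mul_nonneg (mul_nonneg (mul_nonneg hs.1 hc0) hsqpos.le)
          (le_trans (by positivity : (0:ℝ) ≤ Real.sqrt σ / 2) hκq : (0:ℝ) ≤ Real.sqrt q - κ)]
      have hDseg : ∀ s ∈ Set.Icc (0:ℝ) 1, y + s • (g y - y) ∈ D := by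
        apply segment_stay hD.isClosed hfront hΦc hyD
        intro s hs
        exact le_trans (hΦseg s hs) hyL
      have hs2 : Φ (g y) ≤ Φ y := by
        have := hΦseg 1 ⟨zero_le_one, le_rfl⟩
        simpa using this
      have hkeyc := key c hc0 le_rfl
      have hsσ2pos : (0:ℝ) < Real.sqrt σ / 2 := by positivity
      have hmargin : Real.sqrt σ / 2 ≤ Real.sqrt q - κ := hκq
      refine ⟨fun s hs => ⟨hDseg s hs, hΦseg s hs⟩, hs2, ?_, ?_, ?_, ?_⟩
      · -- distance coupling
        have hdist : dist (g y) y = c * ‖v‖ := by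
          rw [hgy_eq, dist_eq_norm]
          have h1 : (y - c • v) - y = -(c • v) := by abel
          rw [h1, norm_neg, norm_smul, Real.norm_of_nonneg hc0]
        have hdec : c * Real.sqrt q * (Real.sqrt q - κ) ≤ Φ y - Φ (g y) := by
          have := hkeyc.1
          rw [← hgy_eq] at this
          linarith
        rw [hdist]
        have h5 : c * ‖v‖ ≤ c * Real.sqrt q := mul_le_mul_of_nonneg_left hvq hc0
        have h6 : c * Real.sqrt q * (Real.sqrt σ / 2) ≤ Φ y - Φ (g y) := by
          refine le_trans ?_ hdec
          apply mul_le_mul_of_nonneg_left hmargin (mul_nonneg hc0 hsqpos.le)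
        have h7 : 2 / Real.sqrt σ * (Φ y - Φ (g y)) ≥ 2 / Real.sqrt σ * (c * Real.sqrt q * (Real.sqrt σ / 2)) := by
          apply mul_le_mul_of_nonneg_left h6 (by positivity)
        have h8 : 2 / Real.sqrt σ * (c * Real.sqrt q * (Real.sqrt σ / 2)) = c * Real.sqrt q := by
          field_simp
        linarith [h5, h7, h8]
      · -- bounded decrease
        have hthis := hkeyc.2
        rw [← hgy_eq] at hthis
        have e1 : c * q ≤ μ * Q := mul_le_mul hcμ hqQ hqnn hμpos.le
        have e2 : c * Real.sqrt q ≤ μ * Real.sqrt Q :=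
          mul_le_mul hcμ hsqQ hsqpos.le hμpos.le
        have e3 : κ * (c * Real.sqrt q) ≤ κ * (μ * Real.sqrt Q) :=
          mul_le_mul_of_nonneg_left e2 hκpos.le
        have hexp : μ * (Q + κ * Real.sqrt Q) = μ * Q + κ * (μ * Real.sqrt Q) := by ring
        linarith [hthis, e1, e3, hμdec, hexp]
      · -- full-speed decrease
        intro hα
        have hχy1 : χ y = 1 := hχ1 y hα
        have hcμeq : c = μ := by rw [hcdef, hχy1, mul_one]
        have hthis := hkeyc.1
        rw [← hgy_eq] at hthis
        have h5 : Real.sqrt σ * (Real.sqrt σ / 2) ≤ Real.sqrt q * (Real.sqrt q - κ) :=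
          mul_le_mul hsq hmargin hsσ2pos.le hsqpos.le
        have h6 : Real.sqrt σ * (Real.sqrt σ / 2) = σ / 2 := by
          linear_combination (Real.mul_self_sqrt hσ.le) / 2
        have h7 : σ / 2 ≤ Real.sqrt q * (Real.sqrt q - κ) := by
          rw [← h6]; exact h5
        have h8 : μ * (σ / 2) ≤ μ * (Real.sqrt q * (Real.sqrt q - κ)) :=
          mul_le_mul_of_nonneg_left h7 hμpos.le
        have h9 : c * Real.sqrt q * (Real.sqrt q - κ) = μ * (Real.sqrt q * (Real.sqrt q - κ)) := by
          rw [hcμeq]; ring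
        linarith [hthis, h8, h9]
      · -- lower bound
        have hthis := hkeyc.2
        rw [← hgy_eq] at hthis
        have e1 : c * q ≤ μ * Q := mul_le_mul hcμ hqQ hqnn hμpos.le
        have e2 : c * Real.sqrt q ≤ μ * Real.sqrt Q :=
          mul_le_mul hcμ hsqQ hsqpos.le hμpos.le
        have e3 : κ * (c * Real.sqrt q) ≤ κ * (μ * Real.sqrt Q) :=
          mul_le_mul_of_nonneg_left e2 hκpos.le
        have hexp : μ * (Q + κ * Real.sqrt Q) = μ * Q + κ * (μ * Real.sqrt Q) := by ring
        have h8 : α - 2*γ₀ ≤ Φ (g y) := by linarith [hthis, e1, e3, hμdec, hexp, hΦlb]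
        exact le_trans (min_le_left _ _) h8
  -- trajectory invariants
  have traj : ∀ x ∈ A, ∀ t : ℕ,
      (g^[t] x ∈ D) ∧ Φ (g^[t] x) ≤ Φ x ∧
      min (α - 2*γ₀) (Φ x) ≤ Φ (g^[t] x) ∧
      dist (g^[t] x) x ≤ 2 / Real.sqrt σ * (Φ x - Φ (g^[t] x)) := by
    intro x hx t
    induction t with
    | zero =>
      refine ⟨by simpa using hA hx, by simp, by simpa using min_le_right _ _, by simp⟩
    | succ t ih =>
      obtain ⟨hD1, hΦ1, hmin1, hdist1⟩ := ih
      have hyL : Φ (g^[t] x) ≤ L := le_trans hΦ1 (hAL x hx)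
      have hyβ : Φ (g^[t] x) ≤ β := le_trans hΦ1 (hAβ x hx)
      have hΦxy : Φ x - Φ (g^[t] x) ≤ β - α + 2*γ₀ := by
        rcases min_cases (α - 2*γ₀) (Φ x) with ⟨heq, hle⟩ | ⟨heq, hle⟩ <;> rw [heq] at hmin1 <;>
          linarith [hAβ x hx]
      have hnear : ∃ x' ∈ A, dist (g^[t] x) x' ≤ Δ :=
        ⟨x, hx, le_trans hdist1 (le_trans (mul_le_mul_of_nonneg_left hΦxy (by positivity)) hΔ)⟩
      obtain ⟨hseg, hs2, hs3, hs4, hs5, hs6⟩ := step _ hD1 hyL hyβ hnear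
      have hit : g^[t+1] x = g (g^[t] x) := Function.iterate_succ_apply' g t x
      refine ⟨?_, ?_, ?_, ?_⟩
      · rw [hit]
        have h1 := (hseg 1 ⟨zero_le_one, le_rfl⟩).1
        have h2 : g^[t] x + (1:ℝ) • (g (g^[t] x) - g^[t] x) = g (g^[t] x) := by
          rw [one_smul]; abel
        rwa [h2] at h1
      · rw [hit]; linarith [hs2, hΦ1]
      · rw [hit]
        exact le_trans (le_min (min_le_left _ _) hmin1) hs6
      · rw [hit]
        calc dist (g (g^[t] x)) x ≤ dist (g (g^[t] x)) (g^[t] x) + dist (g^[t] x) x :=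
              dist_triangle _ _ _
          _ ≤ 2 / Real.sqrt σ * (Φ (g^[t] x) - Φ (g (g^[t] x)))
              + 2 / Real.sqrt σ * (Φ x - Φ (g^[t] x)) := add_le_add hs3 hdist1
          _ = 2 / Real.sqrt σ * (Φ x - Φ (g (g^[t] x))) := by ring
  -- packaged step along the trajectory
  have stepAt : ∀ x ∈ A, ∀ t : ℕ,
      (∀ s ∈ Set.Icc (0:ℝ) 1, (g^[t] x + s • (g (g^[t] x) - g^[t] x)) ∈ D ∧
        Φ (g^[t] x + s • (g (g^[t] x) - g^[t] x)) ≤ Φ (g^[t] x)) ∧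
      Φ (g (g^[t] x)) ≤ Φ (g^[t] x) ∧
      (α ≤ Φ (g^[t] x) → Φ (g (g^[t] x)) ≤ Φ (g^[t] x) - μ*σ/2) := by
    intro x hx t
    obtain ⟨hD1, hΦ1, hmin1, hdist1⟩ := traj x hx t
    have hyL : Φ (g^[t] x) ≤ L := le_trans hΦ1 (hAL x hx)
    have hyβ : Φ (g^[t] x) ≤ β := le_trans hΦ1 (hAβ x hx)
    have hΦxy : Φ x - Φ (g^[t] x) ≤ β - α + 2*γ₀ := by
      rcases min_cases (α - 2*γ₀) (Φ x) with ⟨heq, hle⟩ | ⟨heq, hle⟩ <;> rw [heq] at hmin1 <;>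
        linarith [hAβ x hx]
    have hnear : ∃ x' ∈ A, dist (g^[t] x) x' ≤ Δ :=
      ⟨x, hx, le_trans hdist1 (le_trans (mul_le_mul_of_nonneg_left hΦxy (by positivity)) hΔ)⟩
    obtain ⟨hseg, hs2, hs3, hs4, hs5, hs6⟩ := step _ hD1 hyL hyβ hnear
    exact ⟨hseg, hs2, hs5⟩
  -- monotonicity in time
  have mono : ∀ x ∈ A, ∀ t : ℕ, Φ (g^[t+1] x) ≤ Φ (g^[t] x) := by
    intro x hx t
    rw [Function.iterate_succ_apply']
    exact (stepAt x hx t).2.1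
  have monoLe : ∀ x ∈ A, ∀ s t : ℕ, s ≤ t → Φ (g^[t] x) ≤ Φ (g^[s] x) := by
    intro x hx s t hst
    induction t, hst using Nat.le_induction with
    | base => exact le_rfl
    | succ t ht ih => exact le_trans (mono x hx t) ih
  -- termination
  have hμσ : 0 < μ*σ/2 := by positivity
  obtain ⟨T, hTgt⟩ := exists_nat_gt ((β - α) / (μ*σ/2))
  have hT : β - α < T * (μ*σ/2) := by
    rwa [div_lt_iff₀ hμσ] at hTgt
  have hfinal : ∀ x ∈ A, Φ (g^[T] x) ≤ α := by
    intro x hx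
    by_contra hc
    push_neg at hc
    have hall : ∀ t, t ≤ T → α < Φ (g^[t] x) := fun t ht =>
      lt_of_lt_of_le hc (monoLe x hx t T ht)
    have hdecr : ∀ t : ℕ, t ≤ T → Φ (g^[t] x) ≤ Φ x - t*(μ*σ/2) := by
      intro t
      induction t with
      | zero => intro _; simp
      | succ t ih =>
        intro ht
        have ht' : t ≤ T := le_trans (Nat.le_succ t) ht
        have h1 := ih ht'
        have h2 := (stepAt x hx t).2.2 (le_of_lt (hall t ht'))
        rw [Function.iterate_succ_apply']
        push_cast
        linarith
    have hfin := hdecr T le_rfl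
    have hβx := hAβ x hx
    have hTα := hall T le_rfl
    linarith
  -- the homotopy: concatenation of the straight-line steps
  have hdeform : ∀ t : ℕ, DeformsTo A ((g^[t]) '' A) D := by
    intro t
    induction t with
    | zero =>
      refine ⟨fun p => p.1, continuousOn_fst, fun p hp => hA hp.1, fun x _ => rfl, fun x hx => ?_⟩
      exact ⟨x, hx, rfl⟩
    | succ t ih =>
      refine ih.trans ?_
      refine ⟨fun p => p.1 + p.2 • (g p.1 - p.1), ?_, ?_, ?_, ?_⟩
      · have : Continuous fun p : (Fin N → ℝ) × ℝ => p.1 + p.2 • (g p.1 - p.1) := by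
          apply continuous_fst.add
          exact continuous_snd.smul ((hgc.comp continuous_fst).sub continuous_fst)
        exact this.continuousOn
      · rintro ⟨y, s⟩ ⟨hy, hs⟩
        obtain ⟨x, hx, rfl⟩ := hy
        exact ((stepAt x hx t).1 s hs).1
      · intro y _
        show y + (0:ℝ) • (g y - y) = y
        rw [zero_smul, add_zero]
      · intro y hy
        obtain ⟨x, hx, rfl⟩ := hy
        show g^[t] x + (1:ℝ) • (g (g^[t] x) - g^[t] x) ∈ g^[t+1] '' A
        have h1 : g^[t] x + (1:ℝ) • (g (g^[t] x) - g^[t] x) = g (g^[t] x) := by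
          rw [one_smul]; abel
        rw [h1]
        exact ⟨x, hx, Function.iterate_succ_apply' g t x⟩
  refine (hdeform T).mono subset_rfl ?_ subset_rfl
  rintro z ⟨x, hx, rfl⟩
  exact ⟨(traj x hx T).1, le_trans (traj x hx T).2.1 (hAL x hx), hfinal x hx⟩

end Descent



lemma exists_gap {V : Set ℝ} (hV : V.Finite) (v : ℝ) :
    ∃ η₀ > 0, ∀ u ∈ V, u ≠ v → η₀ ≤ |u - v| := by
  refine Set.Finite.induction_on V hV ⟨1, one_pos, by simp⟩ ?_
  intro a s _ _ ih
  obtain ⟨η₀, hpos, hη⟩ := ih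
  by_cases ha : a = v
  · refine ⟨η₀, hpos, fun u hu hne => ?_⟩
    rcases hu with rfl | hu
    · exact absurd ha hne
    · exact hη u hu hne
  · refine ⟨min η₀ |a - v|, lt_min hpos (abs_pos.mpr (sub_ne_zero.mpr ha)), ?_⟩
    intro u hu hne
    rcases hu with rfl | hu
    · exact min_le_right _ _
    · exact le_trans (min_le_left _ _) (hη u hu hne)

lemma exists_unif_ball {α : Type*} [PseudoMetricSpace α] {D : Set α} {S : Set α} (hS : S.Finite)
    (h : ∀ z ∈ S, ∃ r > 0, Metric.closedBall z r ⊆ D) :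
    ∃ ρ > 0, ∀ z ∈ S, Metric.closedBall z ρ ⊆ D := by
  revert h
  refine Set.Finite.induction_on S hS (fun _ => ⟨1, one_pos, by simp⟩) ?_
  intro a s _ _ ih h
  obtain ⟨ρ, hρ, hball⟩ := ih (fun z hz => h z (Set.mem_insert_of_mem a hz))
  obtain ⟨r, hr, hra⟩ := h a (Set.mem_insert a s)
  refine ⟨min ρ r, lt_min hρ hr, ?_⟩
  intro z hz
  rcases hz with rfl | hz
  · exact le_trans (Metric.closedBall_subset_closedBall (min_le_right _ _)) hra
  · exact le_trans (Metric.closedBall_subset_closedBall (min_le_left _ _)) (hball z hz)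

lemma catLS_balls {E : Type*} [NormedAddCommGroup E] [NormedSpace ℝ E] {S : Set E}
    (hS : S.Finite) {ρ : ℝ} (hρ : 0 < ρ) {B : Set E}
    (hSB : ∀ z ∈ S, Metric.closedBall z ρ ⊆ B) :
    catLS (⋃ z ∈ S, Metric.closedBall z ρ) B ≤ S.ncard ∧
      (catSet (⋃ z ∈ S, Metric.closedBall z ρ) B).Nonempty := by
  rw [Set.ncard_eq_toFinset_card _ hS]
  set n := hS.toFinset.card
  have e : Fin n ≃ hS.toFinset := hS.toFinset.equivFin.symm
  have hmem : ∀ i : Fin n, ((e i : E)) ∈ S := by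
    intro i
    have h2 := (e i).2
    rwa [Set.Finite.mem_toFinset] at h2
  have hcov : (⋃ z ∈ S, Metric.closedBall z ρ) ⊆
      ⋃ i : Fin n, Metric.closedBall ((e i : E)) ρ := by
    intro y hy
    simp only [Set.mem_iUnion] at hy ⊢
    obtain ⟨z, hzS, hyz⟩ := hy
    have hzt : z ∈ hS.toFinset := by rwa [Set.Finite.mem_toFinset]
    refine ⟨e.symm ⟨z, hzt⟩, ?_⟩
    have he : e (e.symm ⟨z, hzt⟩) = ⟨z, hzt⟩ := e.apply_symm_apply _
    rw [he]
    exact hyz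
  have hprop : ∀ i : Fin n, IsClosed (Metric.closedBall ((e i : E)) ρ) ∧
      ContractibleInVia (Metric.closedBall ((e i : E)) ρ) B := by
    intro i
    exact ⟨Metric.isClosed_closedBall, contractibleInVia_of_convex (convex_closedBall _ _)
      (Metric.mem_closedBall_self hρ.le) (hSB _ (hmem i))⟩
  exact ⟨catLS_le_of_cover _ hcov hprop, ⟨n, _, hcov, hprop⟩⟩

set_option maxHeartbeats 2000000 in
lemma key_cat_le {N : ℕ} {Φ : (Fin N → ℝ) → ℝ} {D : Set (Fin N → ℝ)} {L : ℝ}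
    (hΦ : ContDiff ℝ 1 Φ) (hD : IsCompact D)
    (hfront : ∀ x ∈ frontier D, L < Φ x)
    (hZfin : {x | x ∈ D ∧ Φ x ≤ L ∧ fderiv ℝ Φ x = 0}.Finite) :
    catLS {y | y ∈ D ∧ Φ y ≤ L ∧ Φ y ≤ L} D ≤
      {x | x ∈ D ∧ Φ x ≤ L ∧ fderiv ℝ Φ x = 0}.ncard := by
  have hΦc : Continuous Φ := hΦ.continuous
  set Z : Set (Fin N → ℝ) := {x | x ∈ D ∧ Φ x ≤ L ∧ fderiv ℝ Φ x = 0} with hZdef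
  set Y : ℝ → Set (Fin N → ℝ) := fun c => {y | y ∈ D ∧ Φ y ≤ L ∧ Φ y ≤ c} with hYdef
  have hYcomp : ∀ c, IsCompact (Y c) := by
    intro c
    have heq : Y c = D ∩ (Φ ⁻¹' Set.Iic L ∩ Φ ⁻¹' Set.Iic c) := rfl
    rw [heq]
    exact hD.inter_right ((isClosed_Iic.preimage hΦc).inter (isClosed_Iic.preimage hΦc))
  have hball : ∀ y, y ∈ D → Φ y ≤ L → ∃ r > 0, Metric.closedBall y r ⊆ D := by
    intro y hy hΦy
    have hint : y ∈ interior D := by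
      by_contra hni
      have hfr : y ∈ frontier D := by rw [hD.isClosed.frontier_eq]; exact ⟨hy, hni⟩
      linarith [hfront y hfr]
    obtain ⟨ε, hε, hsub⟩ := Metric.isOpen_iff.mp isOpen_interior y hint
    exact ⟨ε/2, by positivity,
      ((Metric.closedBall_subset_ball (by linarith)).trans hsub).trans interior_subset⟩
  have hwit : ∀ K : Set (Fin N → ℝ), IsCompact K → (∀ y ∈ K, y ∈ D ∧ Φ y ≤ L) →
      (catSet K D).Nonempty := by
    intro K hK hKY
    exact catSet_nonempty_of_balls hK fun x hx => hball x (hKY x hx).1 (hKY x hx).2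
  have hmincrit : ∀ c : ℝ, c ≤ L → (Y c).Nonempty → ∃ z, z ∈ Z ∧ Φ z ≤ c := by
    intro c hcL hne
    obtain ⟨z, hzY, hzmin⟩ := (hYcomp c).exists_isMinOn hne hΦc.continuousOn
    refine ⟨z, ⟨hzY.1, hzY.2.1, ?_⟩, hzY.2.2⟩
    have hint : z ∈ interior D := by
      by_contra hni
      have hfr : z ∈ frontier D := by rw [hD.isClosed.frontier_eq]; exact ⟨hzY.1, hni⟩
      linarith [hfront z hfr, hzY.2.1]
    have hloc : IsLocalMin Φ z := by
      refine Filter.eventually_of_mem (isOpen_interior.mem_nhds hint) ?_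
      intro y hyint
      by_contra hlt
      push_neg at hlt
      have hyY : y ∈ Y c := ⟨interior_subset hyint, by linarith [hzY.2.1], by linarith [hzY.2.2]⟩
      exact absurd (hzmin hyY) (not_le.mpr hlt)
    exact hloc.fderiv_eq_zero
  -- main induction on the number of critical points below the level
  have main : ∀ n : ℕ, ∀ c : ℝ, c ≤ L → (Z ∩ {x | Φ x ≤ c}).ncard = n →
      catLS (Y c) D ≤ n := by
    intro n
    induction n using Nat.strong_induction_on with
    | _ n ih =>
      intro c hcL hcard
      rcases (Z ∩ {x | Φ x ≤ c}).eq_empty_or_nonempty with hemp | hne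
      · have hYemp : Y c = ∅ := by
          by_contra hne'
          obtain ⟨z, hzZ, hzc⟩ := hmincrit c hcL (Set.nonempty_iff_ne_empty.mpr hne')
          have hzmem : z ∈ Z ∩ {x | Φ x ≤ c} := ⟨hzZ, hzc⟩
          rw [hemp] at hzmem
          exact Set.notMem_empty z hzmem
        have h0 : catLS (Y c) D ≤ 0 := by
          refine catLS_le_of_cover (n := 0) (fun i => i.elim0) ?_ (fun i => i.elim0)
          rw [hYemp]
          exact Set.empty_subset _
        exact le_trans h0 (Nat.zero_le n)
      · have hSfin : (Z ∩ {x | Φ x ≤ c}).Finite := hZfin.subset Set.inter_subset_left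
        obtain ⟨w, hwS, hwmax'⟩ := Set.Finite.exists_maximalFor Φ _ hSfin hne
        set v : ℝ := Φ w with hvdef
        have hmax : ∀ a ∈ Z ∩ {x | Φ x ≤ c}, Φ a ≤ v := by
          intro a ha
          by_contra hlt
          push_neg at hlt
          exact absurd (hwmax' ha hlt.le) (not_le.mpr hlt)
        have hvL : v ≤ L := hwS.1.2.1
        have hvc : v ≤ c := hwS.2
        set Zv : Set (Fin N → ℝ) := Z ∩ {x | Φ x = v} with hZvdef
        have hZvfin : Zv.Finite := hZfin.subset Set.inter_subset_left
        have hwZv : w ∈ Zv := ⟨hwS.1, rfl⟩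
        have hZvpos : 0 < Zv.ncard := (Set.ncard_pos hZvfin).mpr ⟨w, hwZv⟩
        obtain ⟨η₀, hη₀pos, hη₀gap⟩ := exists_gap (hZfin.image Φ) v
        obtain ⟨ρ, hρpos, hρball⟩ := exists_unif_ball hZvfin
          (fun z hz => hball z hz.1.1 hz.1.2.1)
        set W : Set (Fin N → ℝ) := {y | y ∈ D ∧ Φ y ≤ L ∧ v - η₀/2 ≤ Φ y ∧ Φ y ≤ v + η₀/2 ∧
          ∀ z ∈ Zv, ρ/2 ≤ dist y z} with hWdef
        have hWcomp : IsCompact W := by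
          have heq : W = D ∩ (Φ ⁻¹' Set.Iic L ∩ (Φ ⁻¹' Set.Ici (v - η₀/2) ∩
              (Φ ⁻¹' Set.Iic (v + η₀/2) ∩ ⋂ z ∈ Zv, {y | ρ/2 ≤ dist y z}))) := by
            ext y
            simp only [hWdef, Set.mem_setOf_eq, Set.mem_inter_iff, Set.mem_preimage,
              Set.mem_Iic, Set.mem_Ici, Set.mem_iInter]
            all_goals tauto
          rw [heq]
          refine hD.inter_right ?_
          refine (isClosed_Iic.preimage hΦc).inter ((isClosed_Ici.preimage hΦc).inter
            ((isClosed_Iic.preimage hΦc).inter ?_))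
          exact isClosed_biInter fun z _ =>
            isClosed_le continuous_const (continuous_id.dist continuous_const)
        obtain ⟨σ₂, hσ₂pos, hσ₂⟩ : ∃ σ₂ > 0, ∀ y ∈ W, σ₂ ≤ qf Φ y := by
          rcases W.eq_empty_or_nonempty with hemp' | hWne
          · exact ⟨1, one_pos, by rw [hemp']; simp⟩
          · obtain ⟨y₀, hy₀W, hy₀min⟩ := hWcomp.exists_isMinOn hWne (continuous_qf hΦ).continuousOn
            refine ⟨qf Φ y₀, ?_, fun y hy => hy₀min hy⟩
            rcases lt_or_eq_of_le (qf_nonneg Φ y₀) with h | h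
            · exact h
            · exfalso
              have hcrit : fderiv ℝ Φ y₀ = 0 := fderiv_eq_zero_of_qf _ _ h.symm
              have hy₀Z : y₀ ∈ Z := ⟨hy₀W.1, hy₀W.2.1, hcrit⟩
              have hΦy₀ : Φ y₀ = v := by
                by_contra hne'
                have hgap := hη₀gap (Φ y₀) (Set.mem_image_of_mem Φ hy₀Z) hne'
                have h1 : |Φ y₀ - v| ≤ η₀/2 :=
                  abs_le.mpr ⟨by linarith [hy₀W.2.2.1], by linarith [hy₀W.2.2.2.1]⟩
                linarith
              have hy₀Zv : y₀ ∈ Zv := ⟨hy₀Z, hΦy₀⟩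
              have hd := hy₀W.2.2.2.2 y₀ hy₀Zv
              rw [dist_self] at hd
              linarith
        set η : ℝ := min (η₀/4) (ρ * Real.sqrt σ₂ / 16) with hηdef
        have hsσ₂pos : 0 < Real.sqrt σ₂ := Real.sqrt_pos.mpr hσ₂pos
        have hηpos : 0 < η := lt_min (by positivity) (by positivity)
        have hηη₀ : η ≤ η₀/4 := min_le_left _ _
        have hηρ : η ≤ ρ * Real.sqrt σ₂ / 16 := min_le_right _ _
        -- step (a) : bring the sublevel c down to level v + η
        have hstepa : catLS (Y c) D ≤ catLS (Y (v+η)) D := by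
          rcases le_or_gt c (v + η) with hle | hgt
          · refine catLS_mono_left ?_ (hwit _ (hYcomp (v+η)) (fun y hy => ⟨hy.1, hy.2.1⟩))
            intro y hy
            exact ⟨hy.1, hy.2.1, le_trans hy.2.2 hle⟩
          · set W1 : Set (Fin N → ℝ) := {y | y ∈ D ∧ Φ y ≤ L ∧ v + η/2 ≤ Φ y ∧ Φ y ≤ c}
              with hW1def
            have hW1comp : IsCompact W1 := by
              have heq : W1 = D ∩ (Φ ⁻¹' Set.Iic L ∩ (Φ ⁻¹' Set.Ici (v + η/2) ∩
                  Φ ⁻¹' Set.Iic c)) := rfl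
              rw [heq]
              exact hD.inter_right ((isClosed_Iic.preimage hΦc).inter
                ((isClosed_Ici.preimage hΦc).inter (isClosed_Iic.preimage hΦc)))
            obtain ⟨σ₁, hσ₁pos, hσ₁⟩ : ∃ σ₁ > 0, ∀ y ∈ W1, σ₁ ≤ qf Φ y := by
              rcases W1.eq_empty_or_nonempty with hemp' | hW1ne
              · exact ⟨1, one_pos, by rw [hemp']; simp⟩
              · obtain ⟨y₀, hy₀W, hy₀min⟩ := hW1comp.exists_isMinOn hW1ne
                  (continuous_qf hΦ).continuousOn
                refine ⟨qf Φ y₀, ?_, fun y hy => hy₀min hy⟩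
                rcases lt_or_eq_of_le (qf_nonneg Φ y₀) with h | h
                · exact h
                · exfalso
                  have hcrit : fderiv ℝ Φ y₀ = 0 := fderiv_eq_zero_of_qf _ _ h.symm
                  have hy₀Z : y₀ ∈ Z ∩ {x | Φ x ≤ c} := ⟨⟨hy₀W.1, hy₀W.2.1, hcrit⟩, hy₀W.2.2.2⟩
                  have := hmax _ hy₀Z
                  linarith [hy₀W.2.2.1]
            have hdef := descent hΦ hD hfront (Y c) (v+η) c σ₁ (η/2)
              (2 / Real.sqrt σ₁ * (c - (v+η) + 2*(η/2))) hσ₁pos (by positivity)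
              hgt.le le_rfl (fun y hy => hy.1) (fun y hy => hy.2.1) (fun y hy => hy.2.2)
              (fun y hyD hyL hylo hyhi _ => hσ₁ y ⟨hyD, hyL, by linarith, hyhi⟩)
            exact catLS_le_of_deformsTo (hYcomp c).isClosed hdef
              (hwit _ (hYcomp (v+η)) (fun y hy => ⟨hy.1, hy.2.1⟩))
        -- crossing the critical level v
        set Uo : Set (Fin N → ℝ) := ⋃ z ∈ Zv, Metric.ball z ρ with hUodef
        have hUoopen : IsOpen Uo := isOpen_biUnion fun z _ => Metric.isOpen_ball
        set A' : Set (Fin N → ℝ) := Y (v+η) \ Uo with hA'def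
        have hA'closed : IsClosed A' := (hYcomp (v+η)).isClosed.inter hUoopen.isClosed_compl
        have hA'comp : IsCompact A' := (hYcomp (v+η)).of_isClosed_subset hA'closed Set.diff_subset
        have hballs := catLS_balls hZvfin hρpos (fun z hz => hρball z hz)
        have hcross : catLS (Y (v+η)) D ≤ catLS A' D + Zv.ncard := by
          have hcover : Y (v+η) ⊆ A' ∪ (⋃ z ∈ Zv, Metric.closedBall z ρ) := by
            intro y hy
            by_cases hyU : y ∈ Uo
            · right
              simp only [hUodef, Set.mem_iUnion] at hyU ⊢
              obtain ⟨z, hz, hyz⟩ := hyU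
              exact ⟨z, hz, Metric.ball_subset_closedBall hyz⟩
            · exact Or.inl ⟨hy, hyU⟩
          refine le_trans (catLS_le_add hcover
            (hwit _ hA'comp (fun y hy => ⟨hy.1.1, hy.1.2.1⟩)) hballs.2) ?_
          exact add_le_add_right hballs.1 _
        -- descend from v+η to v-η staying away from the critical balls
        have hdesc2 : catLS A' D ≤ catLS (Y (v-η)) D := by
          have hΔ2 : 2 / Real.sqrt σ₂ * ((v+η) - (v-η) + 2*η) ≤ ρ/2 := by
            have heq : 2 / Real.sqrt σ₂ * ((v+η) - (v-η) + 2*η) = 8*η/Real.sqrt σ₂ := by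
              field_simp; ring
            rw [heq, div_le_iff₀ hsσ₂pos]
            nlinarith [hηρ, hsσ₂pos, Real.sq_sqrt hσ₂pos.le]
          have hdef := descent hΦ hD hfront A' (v-η) (v+η) σ₂ η (ρ/2) hσ₂pos hηpos
            (by linarith) hΔ2 (fun y hy => hy.1.1) (fun y hy => hy.1.2.1)
            (fun y hy => hy.1.2.2) ?_
          · exact catLS_le_of_deformsTo hA'closed hdef
              (hwit _ (hYcomp (v-η)) (fun y hy => ⟨hy.1, hy.2.1⟩))
          · intro y hyD hyL hylo hyhi hnear
            refine hσ₂ y ⟨hyD, hyL, by linarith [hηη₀], by linarith [hηη₀], ?_⟩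
            intro z hz
            obtain ⟨x, hxA', hdyx⟩ := hnear
            have hxz : ρ ≤ dist x z := by
              by_contra hlt
              push_neg at hlt
              exact hxA'.2 (Set.mem_biUnion hz (Metric.mem_ball.mpr hlt))
            have htri : dist x z ≤ dist x y + dist y z := dist_triangle x y z
            rw [dist_comm x y] at htri
            linarith
        -- recursion below the level v - η
        have hdisj : Disjoint (Z ∩ {x | Φ x ≤ v - η}) Zv := by
          rw [Set.disjoint_left]
          rintro x ⟨_, hxle⟩ ⟨_, hxv⟩
          simp only [Set.mem_setOf_eq] at hxle hxv
          rw [hxv] at hxle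
          linarith
        have hsplit : (Z ∩ {x | Φ x ≤ v - η}) ∪ Zv = Z ∩ {x | Φ x ≤ c} := by
          ext x
          simp only [Set.mem_union, Set.mem_inter_iff, Set.mem_setOf_eq]
          constructor
          · rintro (⟨hxZ, hxle⟩ | ⟨hxZ, hxv⟩)
            · exact ⟨hxZ, by linarith⟩
            · exact ⟨hxZ, by rw [hxv]; exact hvc⟩
          · rintro ⟨hxZ, hxc⟩
            have hxv := hmax x ⟨hxZ, hxc⟩
            rcases le_or_gt (Φ x) (v - η) with hle | hgt
            · exact Or.inl ⟨hxZ, hle⟩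
            · right
              refine ⟨hxZ, ?_⟩
              by_contra hne'
              have hgap := hη₀gap (Φ x) (Set.mem_image_of_mem Φ hxZ) hne'
              rw [abs_of_nonpos (by linarith)] at hgap
              linarith
        have hncard : (Z ∩ {x | Φ x ≤ v - η}).ncard + Zv.ncard = n := by
          rw [← hcard, ← hsplit,
            Set.ncard_union_eq hdisj (hZfin.subset Set.inter_subset_left) hZvfin]
        have hlt : (Z ∩ {x | Φ x ≤ v - η}).ncard < n := by omega
        have hrec := ih _ hlt (v - η) (by linarith) rfl
        calc catLS (Y c) D ≤ catLS (Y (v+η)) D := hstepa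
          _ ≤ catLS A' D + Zv.ncard := hcross
          _ ≤ catLS (Y (v-η)) D + Zv.ncard := add_le_add_left hdesc2 _
          _ ≤ (Z ∩ {x | Φ x ≤ v - η}).ncard + Zv.ncard := add_le_add_left hrec _
          _ = n := hncard
  have hZL : Z ∩ {x | Φ x ≤ L} = Z := by
    ext x
    simp only [Set.mem_inter_iff, Set.mem_setOf_eq]
    exact ⟨fun h => h.1, fun h => ⟨h, h.2.1⟩⟩
  exact main (Z.ncard) L le_rfl (by rw [hZL])

set_option maxHeartbeats 1000000 in
theorem multiplicity_via_category (N : ℕ) (hN : 3 ≤ N)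
    (Γ : (Fin N → ℝ) → ℝ) (hΓC : ContDiff ℝ 1 Γ)
    (X : Set (Fin N → ℝ)) (hX : IsCompact X) (hXne : X.Nonempty)
    (δ : ℝ) (hδ : 0 < δ)
    (a b : ℝ) (ha : ∀ x ∈ X, Γ x = a)
    (hb : b = sInf (Γ '' frontier (Metric.cthickening δ X)))
    (hab : a < b)
    (C₁ : ℝ) (hC₁ : 0 < C₁)
    (Φ : ℝ → (Fin N → ℝ) → ℝ) (hΦC : ∀ ε : ℝ, 0 < ε → ContDiff ℝ 1 (Φ ε))
    (happrox : ∀ η : ℝ, 0 < η → ∃ ε₁ : ℝ, 0 < ε₁ ∧ ∀ ε : ℝ, 0 < ε → ε < ε₁ →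
        ∀ ξ : Fin N → ℝ, ε • ξ ∈ Metric.cthickening δ X →
          |Φ ε ξ - C₁ * Γ (ε • ξ)| ≤ η) :
    ∃ ε₀ : ℝ, 0 < ε₀ ∧ ∀ ε : ℝ, 0 < ε → ε < ε₀ →
      IsCompact {ξ : Fin N → ℝ | ε • ξ ∈ Metric.cthickening δ X ∧
          Φ ε ξ ≤ C₁ * (a + b) / 2} ∧
      {ξ : Fin N → ℝ | ε • ξ ∈ X} ⊆
        {ξ | ε • ξ ∈ Metric.cthickening δ X ∧ Φ ε ξ ≤ C₁ * (a + b) / 2} ∧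
      {ξ : Fin N → ℝ | ε • ξ ∈ Metric.cthickening δ X ∧ Φ ε ξ ≤ C₁ * (a + b) / 2} ⊆
        {ξ | ε • ξ ∈ Metric.cthickening δ X} ∧
      {ξ : Fin N → ℝ | ε • ξ ∈ Metric.cthickening δ X ∧ Φ ε ξ ≤ C₁ * (a + b) / 2} ∩
        frontier {ξ : Fin N → ℝ | ε • ξ ∈ Metric.cthickening δ X} = ∅ ∧
      ∃ S : Set (Fin N → ℝ), S ⊆ {ξ | ε • ξ ∈ Metric.cthickening δ X} ∧ S.Finite ∧
        catLS X (Metric.cthickening δ X) ≤ S.ncard ∧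
        ∀ ξ ∈ S, fderiv ℝ (Φ ε) ξ = 0 := by
  have hKcomp : IsCompact (Metric.cthickening δ X) :=
    Metric.isCompact_of_isClosed_isBounded Metric.isClosed_cthickening hX.isBounded.cthickening
  have hfrsubK : frontier (Metric.cthickening δ X) ⊆ Metric.cthickening δ X := by
    have h1 : frontier (Metric.cthickening δ X) ⊆ closure (Metric.cthickening δ X) :=
      frontier_subset_closure
    rwa [Metric.isClosed_cthickening.closure_eq] at h1
  have hΓfront : ∀ y ∈ frontier (Metric.cthickening δ X), b ≤ Γ y := by
    intro y hy
    rw [hb]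
    have hfrcomp : IsCompact (frontier (Metric.cthickening δ X)) :=
      hKcomp.of_isClosed_subset isClosed_frontier hfrsubK
    exact csInf_le (hfrcomp.image hΓC.continuous).bddBelow (Set.mem_image_of_mem Γ hy)
  have hbapos : 0 < b - a := by linarith
  obtain ⟨ε₁, hε₁pos, happx⟩ := happrox (C₁ * (b - a) / 4) (by positivity)
  refine ⟨ε₁, hε₁pos, ?_⟩
  intro ε hεpos hεlt
  have hΦεC : ContDiff ℝ 1 (Φ ε) := hΦC ε hεpos
  have hΦc : Continuous (Φ ε) := hΦεC.continuous
  have happ : ∀ ξ : Fin N → ℝ, ε • ξ ∈ Metric.cthickening δ X →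
      |Φ ε ξ - C₁ * Γ (ε • ξ)| ≤ C₁ * (b - a) / 4 := happx ε hεpos hεlt
  set e : (Fin N → ℝ) ≃ₜ (Fin N → ℝ) := Homeomorph.smulOfNeZero ε (ne_of_gt hεpos) with he
  have hDpre : {ξ : Fin N → ℝ | ε • ξ ∈ Metric.cthickening δ X} =
      e ⁻¹' (Metric.cthickening δ X) := rfl
  have hDcomp : IsCompact {ξ : Fin N → ℝ | ε • ξ ∈ Metric.cthickening δ X} := by
    rw [hDpre]
    exact e.isCompact_preimage.mpr hKcomp
  have hfrD : frontier {ξ : Fin N → ℝ | ε • ξ ∈ Metric.cthickening δ X} =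
      e ⁻¹' (frontier (Metric.cthickening δ X)) := by
    rw [hDpre, e.preimage_frontier]
  have hfront : ∀ ξ ∈ frontier {ξ : Fin N → ℝ | ε • ξ ∈ Metric.cthickening δ X},
      C₁ * (a + b) / 2 < Φ ε ξ := by
    intro ξ hξ
    rw [hfrD] at hξ
    have hξ' : ε • ξ ∈ frontier (Metric.cthickening δ X) := hξ
    have hmemK : ε • ξ ∈ Metric.cthickening δ X := hfrsubK hξ'
    have h1 := happ ξ hmemK
    rw [abs_le] at h1
    have h2 := hΓfront _ hξ'
    have h3 : C₁ * b ≤ C₁ * Γ (ε • ξ) := mul_le_mul_of_nonneg_left h2 hC₁.le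
    nlinarith [h1.1]
  have hXsub : {ξ : Fin N → ℝ | ε • ξ ∈ X} ⊆
      {ξ | ε • ξ ∈ Metric.cthickening δ X ∧ Φ ε ξ ≤ C₁ * (a + b) / 2} := by
    intro ξ hξ
    have hK' : ε • ξ ∈ Metric.cthickening δ X := Metric.self_subset_cthickening X hξ
    have h1 := happ ξ hK'
    have h2 : Γ (ε • ξ) = a := ha _ hξ
    rw [abs_le, h2] at h1
    refine ⟨hK', ?_⟩
    nlinarith [h1.2]
  have hYcomp : IsCompact {ξ : Fin N → ℝ | ε • ξ ∈ Metric.cthickening δ X ∧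
      Φ ε ξ ≤ C₁ * (a + b) / 2} := by
    have heq : {ξ : Fin N → ℝ | ε • ξ ∈ Metric.cthickening δ X ∧ Φ ε ξ ≤ C₁ * (a + b) / 2} =
        {ξ : Fin N → ℝ | ε • ξ ∈ Metric.cthickening δ X} ∩ (Φ ε) ⁻¹' Set.Iic (C₁ * (a + b) / 2) :=
      rfl
    rw [heq]
    exact hDcomp.inter_right (isClosed_Iic.preimage hΦc)
  have hdisj : {ξ : Fin N → ℝ | ε • ξ ∈ Metric.cthickening δ X ∧ Φ ε ξ ≤ C₁ * (a + b) / 2} ∩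
      frontier {ξ : Fin N → ℝ | ε • ξ ∈ Metric.cthickening δ X} = ∅ := by
    ext ξ
    simp only [Set.mem_inter_iff, Set.mem_setOf_eq, Set.mem_empty_iff_false, iff_false,
      not_and]
    rintro ⟨hK', hΦle⟩ hfr
    exact absurd hΦle (not_le.mpr (hfront ξ hfr))
  refine ⟨hYcomp, hXsub, fun ξ h => h.1, hdisj, ?_⟩
  -- the critical-point count
  have hball : ∀ y : Fin N → ℝ, ε • y ∈ Metric.cthickening δ X → Φ ε y ≤ C₁ * (a + b) / 2 →
      ∃ r > 0, Metric.closedBall y r ⊆ {ξ : Fin N → ℝ | ε • ξ ∈ Metric.cthickening δ X} := by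
    intro y hy hΦy
    have hint : y ∈ interior {ξ : Fin N → ℝ | ε • ξ ∈ Metric.cthickening δ X} := by
      by_contra hni
      have hcl : IsClosed {ξ : Fin N → ℝ | ε • ξ ∈ Metric.cthickening δ X} := hDcomp.isClosed
      have hfr : y ∈ frontier {ξ : Fin N → ℝ | ε • ξ ∈ Metric.cthickening δ X} := by
        rw [hcl.frontier_eq]; exact ⟨hy, hni⟩
      linarith [hfront y hfr]
    obtain ⟨r, hr, hsub⟩ := Metric.isOpen_iff.mp isOpen_interior y hint
    exact ⟨r/2, by positivity,
      ((Metric.closedBall_subset_ball (by linarith)).trans hsub).trans interior_subset⟩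
  by_cases hZfin : Set.Finite {x | x ∈ {ξ : Fin N → ℝ | ε • ξ ∈ Metric.cthickening δ X} ∧
      Φ ε x ≤ C₁ * (a + b) / 2 ∧ fderiv ℝ (Φ ε) x = 0}
  · refine ⟨_, fun x hx => hx.1, hZfin, ?_, fun x hx => hx.2.2⟩
    have hwit1 : (catSet (e ⁻¹' X) (e ⁻¹' (Metric.cthickening δ X))).Nonempty := by
      apply catSet_nonempty_of_balls (e.isCompact_preimage.mpr hX)
      intro x hx
      have hx' : ε • x ∈ X := hx
      obtain ⟨hxK, hxΦ⟩ := hXsub hx'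
      exact hball x hxK hxΦ
    have hwit2 : (catSet {y | y ∈ {ξ : Fin N → ℝ | ε • ξ ∈ Metric.cthickening δ X} ∧
        Φ ε y ≤ C₁ * (a + b) / 2 ∧ Φ ε y ≤ C₁ * (a + b) / 2}
        (e ⁻¹' (Metric.cthickening δ X))).Nonempty := by
      apply catSet_nonempty_of_balls
      · have heq : {y | y ∈ {ξ : Fin N → ℝ | ε • ξ ∈ Metric.cthickening δ X} ∧
            Φ ε y ≤ C₁ * (a + b) / 2 ∧ Φ ε y ≤ C₁ * (a + b) / 2} =
            {ξ : Fin N → ℝ | ε • ξ ∈ Metric.cthickening δ X} ∩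
            ((Φ ε) ⁻¹' Set.Iic (C₁ * (a + b) / 2) ∩ (Φ ε) ⁻¹' Set.Iic (C₁ * (a + b) / 2)) := rfl
        rw [heq]
        exact hDcomp.inter_right ((isClosed_Iic.preimage hΦc).inter (isClosed_Iic.preimage hΦc))
      · intro x hx
        exact hball x hx.1 hx.2.1
    have h1 : catLS X (Metric.cthickening δ X) ≤
        catLS (e ⁻¹' X) (e ⁻¹' (Metric.cthickening δ X)) :=
      catLS_le_preimage_homeo e hwit1
    have h2 : catLS (e ⁻¹' X) (e ⁻¹' (Metric.cthickening δ X)) ≤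
        catLS {y | y ∈ {ξ : Fin N → ℝ | ε • ξ ∈ Metric.cthickening δ X} ∧
          Φ ε y ≤ C₁ * (a + b) / 2 ∧ Φ ε y ≤ C₁ * (a + b) / 2}
          (e ⁻¹' (Metric.cthickening δ X)) := by
      refine catLS_mono_left ?_ hwit2
      intro x hx
      have hx' : ε • x ∈ X := hx
      obtain ⟨hxK, hxΦ⟩ := hXsub hx'
      exact ⟨hxK, hxΦ, hxΦ⟩
    have h3 := key_cat_le hΦεC hDcomp hfront hZfin
    exact le_trans h1 (le_trans h2 h3)
  · have hZinf : Set.Infinite {x | x ∈ {ξ : Fin N → ℝ | ε • ξ ∈ Metric.cthickening δ X} ∧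
        Φ ε x ≤ C₁ * (a + b) / 2 ∧ fderiv ℝ (Φ ε) x = 0} := hZfin
    obtain ⟨S, hSsub, hSfin, hScard⟩ :=
      hZinf.exists_subset_ncard_eq (catLS X (Metric.cthickening δ X))
    exact ⟨S, fun x hx => (hSsub hx).1, hSfin, le_of_eq hScard.symm,
      fun x hx => (hSsub hx).2.2⟩
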